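/- Let p be an odd prime, m ≥ 1, k = p^m - 2, and K a field of characteristic p. Define Gz(f,g) = Σ_{i=0}^{⌊(k-1)/2⌋} (-1)^i (f^{(i)} g^{(k-i)} - f^{(k-i)} g^{(i)}), where f^{(i)} denotes the i-th distinguished derivative ∂^i f in the divided power algebra O(1;N) with p^N > k. Then Gz : F_1 ⊗ F_1 → F_{k+2} is vect(1;N)-invariant: for every vector field D = h∂, L_D(Gz(f,g)) = Gz(L_D f, g) + Gz(f, L_D g), where L_D acts on F_a by L_D(f) = h∂f + a f ∂h with a = 1 on the sources and a = k+2 on the target. -/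

import Mathlib

open Finset

/-- Multiplication in the divided power algebra `O(1;N)` truncated at `n = p^N`;
elements are given by their coefficients in the basis `u^{(r)}`, `0 ≤ r < n`,
and `u^{(r)} · u^{(s)} = C(r+s, r) u^{(r+s)}` (zero if `r+s ≥ n`). -/
def dpMul {K : Type*} [Field K] (n : ℕ) (f g : ℕ → K) : ℕ → K :=
  fun t => if t < n then ∑ i ∈ Finset.range (t + 1), ((t.choose i : K) * f i * g (t - i)) else 0

/-- The distinguished derivation `∂` of `O(1;N)`: `∂(u^{(r)}) = u^{(r-1)}`. -/
def dpDer {K : Type*} [Field K] (n : ℕ) (f : ℕ → K) : ℕ → K :=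
  fun r => if r + 1 < n then f (r + 1) else 0

/-- Membership in `O(1;N)`: coefficients vanish in degrees `≥ n`. -/
def dpSupp {K : Type*} [Field K] (n : ℕ) (f : ℕ → K) : Prop := ∀ r, n ≤ r → f r = 0

/-- Berezin-type integral: the coefficient of `u^{(n-1)}`. -/
def dpInt {K : Type*} [Field K] (n : ℕ) (f : ℕ → K) : K := f (n - 1)

/-- Lie derivative along `h∂ ∈ vect(1;N)` acting on the weighted density module
`F_a`: `L_{h∂}(f) = h·∂f + a·f·∂h`. -/
def dpLie {K : Type*} [Field K] (n : ℕ) (a : K) (h f : ℕ → K) : ℕ → K :=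
  dpMul n h (dpDer n f) + a • dpMul n f (dpDer n h)

/-- The analog of the Grozman operator for odd p:
Gz(f,g) = Σ_{i=0}^{⌊(k-1)/2⌋} (-1)^i (f^{(i)} g^{(k-i)} - f^{(k-i)} g^{(i)}). -/
def GzOdd {K : Type*} [Field K] (n k : ℕ) (f g : ℕ → K) : ℕ → K :=
  ∑ i ∈ Finset.range ((k - 1) / 2 + 1),
    ((-1 : K) ^ i) •
      (dpMul n ((dpDer n)^[i] f) ((dpDer n)^[k - i] g)
        - dpMul n ((dpDer n)^[k - i] f) ((dpDer n)^[i] g))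

section Lemmas
variable {K : Type*} [Field K] {n : ℕ}

lemma dpMul_supp (f g : ℕ → K) : dpSupp n (dpMul n f g) := by
  intro r hr; simp [dpMul, Nat.not_lt.2 hr]

lemma dpDer_supp (f : ℕ → K) : dpSupp n (dpDer n f) := by
  intro r hr
  have : ¬ (r + 1 < n) := by omega
  simp [dpDer, this]

lemma dpDer_apply_of_supp {f : ℕ → K} (hf : dpSupp n f) (i : ℕ) :
    dpDer n f i = f (i + 1) := by
  by_cases h : i + 1 < n
  · simp [dpDer, h]
  · rw [hf (i+1) (by omega)]; simp [dpDer, h]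

lemma iterDer_supp {f : ℕ → K} (hf : dpSupp n f) (j : ℕ) :
    dpSupp n ((dpDer n)^[j] f) := by
  cases j with
  | zero => exact hf
  | succ j => rw [Function.iterate_succ_apply']; exact dpDer_supp _

lemma dpDer_add (x y : ℕ → K) : dpDer n (x + y) = dpDer n x + dpDer n y := by
  funext r; simp only [dpDer, Pi.add_apply]; split <;> simp

lemma dpDer_smul (c : K) (x : ℕ → K) : dpDer n (c • x) = c • dpDer n x := by
  funext r; simp only [dpDer, Pi.smul_apply]; split <;> simp

lemma dpDer_sub (x y : ℕ → K) : dpDer n (x - y) = dpDer n x - dpDer n y := by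
  funext r; simp only [dpDer, Pi.sub_apply]; split <;> simp

lemma dpDer_sum {ι : Type*} (s : Finset ι) (F : ι → ℕ → K) :
    dpDer n (∑ i ∈ s, F i) = ∑ i ∈ s, dpDer n (F i) := by
  funext r
  simp only [dpDer, Finset.sum_apply]
  split <;> simp

lemma dpMul_comm (f g : ℕ → K) : dpMul n f g = dpMul n g f := by
  funext t
  simp only [dpMul]
  split
  · rw [← Finset.sum_range_reflect]
    refine Finset.sum_congr rfl fun i hi => ?_
    have hi' : i ≤ t := by simp at hi; omega
    have h2 : t + 1 - 1 - i = t - i := by omega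
    have h1 : t - (t - i) = i := by omega
    rw [h2, h1, Nat.choose_symm hi']
    ring
  · rfl


lemma dpMul_add_right (f x y : ℕ → K) :
    dpMul n f (x + y) = dpMul n f x + dpMul n f y := by
  funext t
  simp only [dpMul, Pi.add_apply]
  split
  · rw [← Finset.sum_add_distrib]
    exact Finset.sum_congr rfl fun i _ => by ring
  · simp

lemma dpMul_smul_right (c : K) (f x : ℕ → K) :
    dpMul n f (c • x) = c • dpMul n f x := by
  funext t
  simp only [dpMul, Pi.smul_apply, smul_eq_mul]
  split
  · rw [Finset.mul_sum]
    exact Finset.sum_congr rfl fun i _ => by ring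
  · simp

lemma dpMul_sub_right (f x y : ℕ → K) :
    dpMul n f (x - y) = dpMul n f x - dpMul n f y := by
  funext t
  simp only [dpMul, Pi.sub_apply]
  split
  · rw [← Finset.sum_sub_distrib]
    exact Finset.sum_congr rfl fun i _ => by ring
  · simp

lemma dpMul_sum_right {ι : Type*} (s : Finset ι) (f : ℕ → K) (F : ι → ℕ → K) :
    dpMul n f (∑ i ∈ s, F i) = ∑ i ∈ s, dpMul n f (F i) := by
  classical
  induction s using Finset.induction_on with
  | empty =>
      simp only [Finset.sum_empty]
      funext t; simp [dpMul]
  | insert _ _ hx ih =>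
      rw [Finset.sum_insert hx, Finset.sum_insert hx, dpMul_add_right, ih]

lemma dpMul_sum_left {ι : Type*} (s : Finset ι) (g : ℕ → K) (F : ι → ℕ → K) :
    dpMul n (∑ i ∈ s, F i) g = ∑ i ∈ s, dpMul n (F i) g := by
  rw [dpMul_comm, dpMul_sum_right]
  exact Finset.sum_congr rfl fun i _ => dpMul_comm _ _

lemma dpMul_smul_left (c : K) (f x : ℕ → K) :
    dpMul n (c • x) f = c • dpMul n x f := by
  rw [dpMul_comm, dpMul_smul_right, dpMul_comm]

lemma dpMul_add_left (f x y : ℕ → K) :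
    dpMul n (x + y) f = dpMul n x f + dpMul n y f := by
  rw [dpMul_comm, dpMul_add_right, dpMul_comm f x, dpMul_comm f y]

lemma sum_range_extend {A : Type*} [AddCommMonoid A] {M N : ℕ} (h : M ≤ N) (F : ℕ → A)
    (hF : ∀ i, M ≤ i → i < N → F i = 0) :
    ∑ i ∈ Finset.range M, F i = ∑ i ∈ Finset.range N, F i :=
  Finset.sum_subset (Finset.range_subset_range.2 h)
    (fun x hx hx' => hF x (by simpa using hx') (by simpa using hx))

lemma sum_range_drop {A : Type*} [AddCommMonoid A] {N j : ℕ} (h : j ≤ N) (F : ℕ → A)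
    (hF : ∀ i, i < j → F i = 0) :
    ∑ i ∈ Finset.range N, F i = ∑ l ∈ Finset.range (N - j), F (j + l) := by
  rw [← Finset.sum_Ico_eq_sum_range, Finset.range_eq_Ico]
  refine (Finset.sum_subset (Finset.Ico_subset_Ico (Nat.zero_le j) le_rfl) ?_).symm
  intro x hx hx'
  simp only [Finset.mem_Ico] at hx hx'
  exact hF x (by omega)

lemma dpMul_assoc (f g h : ℕ → K) :
    dpMul n (dpMul n f g) h = dpMul n f (dpMul n g h) := by
  funext t
  simp only [dpMul]
  split
  case isFalse => rfl
  case isTrue ht =>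
  have L : ∑ i ∈ Finset.range (t + 1),
      ((t.choose i : K) * (if i < n then ∑ j ∈ Finset.range (i + 1),
          ((i.choose j : K) * f j * g (i - j)) else 0) * h (t - i))
      = ∑ i ∈ Finset.range (t + 1), ∑ j ∈ Finset.range (t + 1),
        ((t.choose i : K) * (i.choose j : K) * f j * g (i - j) * h (t - i)) := by
    refine Finset.sum_congr rfl fun i hi => ?_
    simp only [Finset.mem_range] at hi
    have hi' : i < n := by omega
    rw [if_pos hi', Finset.mul_sum, Finset.sum_mul,
      sum_range_extend (show i + 1 ≤ t + 1 by omega)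
        (fun j => (t.choose i : K) * ((i.choose j : K) * f j * g (i - j)) * h (t - i))
        (fun j hj _ => by
          have : i.choose j = 0 := Nat.choose_eq_zero_of_lt (by omega)
          simp [this])]
    exact Finset.sum_congr rfl fun j _ => by ring
  have R : ∑ j ∈ Finset.range (t + 1),
      ((t.choose j : K) * f j * (if t - j < n then ∑ l ∈ Finset.range (t - j + 1),
          (((t-j).choose l : K) * g l * h (t - j - l)) else 0))
      = ∑ j ∈ Finset.range (t + 1), ∑ l ∈ Finset.range (t + 1),
        ((t.choose j : K) * ((t-j).choose l : K) * f j * g l * h (t - j - l)) := by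
    refine Finset.sum_congr rfl fun j hj => ?_
    simp only [Finset.mem_range] at hj
    have hj' : t - j < n := by omega
    rw [if_pos hj', Finset.mul_sum,
      sum_range_extend (show t - j + 1 ≤ t + 1 by omega)
        (fun l => (t.choose j : K) * f j * (((t-j).choose l : K) * g l * h (t - j - l)))
        (fun l hl _ => by
          have : (t - j).choose l = 0 := Nat.choose_eq_zero_of_lt (by omega)
          simp [this])]
    exact Finset.sum_congr rfl fun l _ => by ring
  rw [L, R, Finset.sum_comm]
  refine Finset.sum_congr rfl fun j hj => ?_
  simp only [Finset.mem_range] at hj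
  rw [sum_range_drop (show j ≤ t + 1 by omega)
      (fun i => (t.choose i : K) * (i.choose j : K) * f j * g (i - j) * h (t - i))
      (fun i hij => by
        have : i.choose j = 0 := Nat.choose_eq_zero_of_lt (show i < j by omega)
        simp [this]),
    ← sum_range_extend (show t + 1 - j ≤ t + 1 by omega)
      (fun l => (t.choose j : K) * ((t-j).choose l : K) * f j * g l * h (t - j - l))
      (fun l hl _ => by
        have : (t - j).choose l = 0 := Nat.choose_eq_zero_of_lt (show t - j < l by omega)
        simp [this])]
  refine Finset.sum_congr rfl fun l hl => ?_
  simp only [Finset.mem_range] at hl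
  have h1 : j + l - j = l := by omega
  have h2 : t - (j + l) = t - j - l := by omega
  have h3 : (t.choose (j+l)) * ((j+l).choose j) = t.choose j * ((t-j).choose l) := by
    have := Nat.choose_mul (n := t) (k := j + l) (s := j) (by omega)
    rw [this, h1]
  rw [h1, h2]
  have h3' : ((t.choose (j+l) : K)) * ((j+l).choose j : K) = (t.choose j : K) * ((t-j).choose l : K) := by
    exact_mod_cast congrArg (Nat.cast : ℕ → K) h3
  linear_combination (f j * g l * h (t - j - l)) * h3'


lemma dpMul_left_comm (a b c : ℕ → K) :
    dpMul n a (dpMul n b c) = dpMul n b (dpMul n a c) := by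
  rw [← dpMul_assoc, dpMul_comm a b, dpMul_assoc]

lemma pascal_smul {M : Type*} [AddCommMonoid M] [Module K M] (v : ℕ → ℕ → M) (t : ℕ) :
    (∑ i ∈ Finset.range (t+1), ((t.choose i : K)) • v (i+1) (t-i))
      + ∑ i ∈ Finset.range (t+1), ((t.choose i : K)) • v i (t-i+1)
    = ∑ j ∈ Finset.range (t+2), (((t+1).choose j : K)) • v j (t+1-j) := by
  rw [Finset.sum_range_succ' (fun j => (((t+1).choose j : K)) • v j (t+1-j)) (t+1)]
  simp only [Nat.choose_succ_succ, Nat.succ_sub_succ, Nat.cast_add, add_smul, Nat.choose_zero_right,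
    Nat.cast_one, one_smul]
  rw [Finset.sum_add_distrib]
  simp only [Nat.succ_eq_add_one, Nat.sub_zero]
  have h2 : ∑ i ∈ Finset.range (t+1), ((t.choose (i+1) : K)) • v (i+1) (t-i) + v 0 (t+1)
      = ∑ i ∈ Finset.range (t+1), ((t.choose i : K)) • v i (t-i+1) := by
    have e1 : ∑ j ∈ Finset.range (t+2), ((t.choose j : K)) • v j (t+1-j)
        = ∑ i ∈ Finset.range (t+1), ((t.choose (i+1) : K)) • v (i+1) (t-i) + v 0 (t+1) := by
      rw [Finset.sum_range_succ' (fun j => ((t.choose j : K)) • v j (t+1-j)) (t+1)]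
      simp [Nat.succ_sub_succ]
    rw [← e1, Finset.sum_range_succ, Nat.choose_succ_self]
    simp only [Nat.cast_zero, zero_smul, add_zero]
    refine Finset.sum_congr rfl fun j hj => ?_
    simp only [Finset.mem_range] at hj
    rw [show t + 1 - j = t - j + 1 by omega]
  rw [add_assoc, h2]

section CharP
variable {p : ℕ} [CharP K p]

lemma cast_choose_pow_eq_zero (hp : p.Prime) {Np i : ℕ} (hi : i ≠ 0) (hi' : i ≠ p ^ Np) :
    (((p ^ Np).choose i : K)) = 0 :=
  (CharP.cast_eq_zero_iff K p _).2 (hp.dvd_choose_pow hi hi')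

lemma dpDer_dpMul (hp : p.Prime) {Np : ℕ} {f g : ℕ → K} (hf : dpSupp (p ^ Np) f) (hg : dpSupp (p ^ Np) g) :
    dpDer (p ^ Np) (dpMul (p ^ Np) f g)
      = dpMul (p ^ Np) (dpDer (p ^ Np) f) g + dpMul (p ^ Np) f (dpDer (p ^ Np) g) := by
  have hn : True := trivial
  generalize hgen : p ^ Np = n at *
  funext t
  simp only [Pi.add_apply]
  by_cases ht : t < n
  · have key : dpMul n (dpDer n f) g t + dpMul n f (dpDer n g) t
        = ∑ j ∈ Finset.range (t+2), (((t+1).choose j : K)) • (f j * g (t+1-j)) := by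
      rw [← pascal_smul (fun a b => f a * g b) t]
      simp only [dpMul, if_pos ht, smul_eq_mul]
      congr 1
      · exact Finset.sum_congr rfl fun i _ => by
          rw [dpDer_apply_of_supp hf]; ring
      · exact Finset.sum_congr rfl fun i _ => by
          rw [dpDer_apply_of_supp hg]; ring
    rw [key]
    by_cases ht1 : t + 1 < n
    · simp only [dpDer, if_pos ht1, dpMul, if_pos ht1]
      exact (Finset.sum_congr rfl fun j _ => by rw [smul_eq_mul]; ring).symm
    · have htn : t + 1 = n := by omega
      have hz : ∀ j ∈ Finset.range (t+2), (((t+1).choose j : K)) • (f j * g (t+1-j)) = 0 := by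
        intro j hj
        simp only [Finset.mem_range] at hj
        rcases Nat.eq_zero_or_pos j with rfl | hj0
        · have h0 : g (t + 1 - 0) = 0 := by rw [Nat.sub_zero]; exact hg _ (by omega)
          rw [h0, mul_zero, smul_zero]
        · rcases eq_or_ne j (t+1) with rfl | hjt
          · have h0 : f (t + 1) = 0 := hf _ (by omega)
            rw [h0, zero_mul, smul_zero]
          · have : (((t+1).choose j : K)) = 0 := by
              rw [htn, ← hgen]
              exact cast_choose_pow_eq_zero hp (by omega) (by rw [hgen, ← htn]; exact hjt)
            simp [this]
      rw [Finset.sum_eq_zero hz]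
      have h1 : ¬ (t + 1 < n) := by omega
      simp [dpDer, h1]
  · have h1 : ¬ (t + 1 < n) := by omega
    simp [dpDer, dpMul, h1, Nat.not_lt.2 (Nat.not_lt.1 ht)]

lemma iter_leibniz (hp : p.Prime) {Np : ℕ} {f g : ℕ → K} (hf : dpSupp (p ^ Np) f) (hg : dpSupp (p ^ Np) g)
    (j : ℕ) :
    (dpDer (p ^ Np))^[j] (dpMul (p ^ Np) f g)
      = ∑ s ∈ Finset.range (j+1), ((j.choose s : K)) •
          dpMul (p ^ Np) ((dpDer (p ^ Np))^[s] f) ((dpDer (p ^ Np))^[j-s] g) := by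
  induction j with
  | zero => simp
  | succ j ih =>
      rw [Function.iterate_succ_apply', ih, dpDer_sum]
      have step : ∀ s ∈ Finset.range (j+1),
          dpDer (p ^ Np) (((j.choose s : K)) •
            dpMul (p ^ Np) ((dpDer (p ^ Np))^[s] f) ((dpDer (p ^ Np))^[j-s] g))
          = ((j.choose s : K)) •
              (dpMul (p ^ Np) ((dpDer (p ^ Np))^[s+1] f) ((dpDer (p ^ Np))^[j-s] g)
               + dpMul (p ^ Np) ((dpDer (p ^ Np))^[s] f) ((dpDer (p ^ Np))^[(j-s)+1] g)) := by
        intro s _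
        rw [dpDer_smul, dpDer_dpMul hp (iterDer_supp hf s) (iterDer_supp hg (j-s)),
          Function.iterate_succ_apply' (dpDer (p ^ Np)) s f,
          Function.iterate_succ_apply' (dpDer (p ^ Np)) (j-s) g]
      rw [Finset.sum_congr rfl step]
      simp only [smul_add]
      rw [Finset.sum_add_distrib]
      have := pascal_smul (K := K) (M := ℕ → K)
        (fun a b => dpMul (p ^ Np) ((dpDer (p ^ Np))^[a] f) ((dpDer (p ^ Np))^[b] g)) j
      calc _ = (∑ i ∈ Finset.range (j+1), ((j.choose i : K)) •
              dpMul (p ^ Np) ((dpDer (p ^ Np))^[i+1] f) ((dpDer (p ^ Np))^[j-i] g))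
            + ∑ i ∈ Finset.range (j+1), ((j.choose i : K)) •
              dpMul (p ^ Np) ((dpDer (p ^ Np))^[i] f) ((dpDer (p ^ Np))^[j-i+1] g) := rfl
        _ = ∑ s ∈ Finset.range (j+2), (((j+1).choose s : K)) •
              dpMul (p ^ Np) ((dpDer (p ^ Np))^[s] f) ((dpDer (p ^ Np))^[j+1-s] g) := this
        _ = _ := by
              refine Finset.sum_congr rfl fun s hs => ?_
              rfl


lemma cast_choose_pred_pow (hp : p.Prime) {M j : ℕ} (hj : j ≤ p ^ M - 1) :
    (((p ^ M - 1).choose j : K)) = (-1 : K) ^ j := by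
  induction j with
  | zero => simp
  | succ j ih =>
      have hP : 1 ≤ p ^ M := Nat.one_le_pow _ _ hp.pos
      obtain ⟨q, hq⟩ : ∃ q, p ^ M = q + 1 := ⟨p ^ M - 1, by omega⟩
      have hq' : p ^ M - 1 = q := by omega
      have hpas : (p ^ M - 1).choose j + (p ^ M - 1).choose (j+1) = (p ^ M).choose (j+1) := by
        rw [hq', hq]
        exact (Nat.choose_succ_succ' q j).symm
      have h0 : (((p ^ M).choose (j+1) : K)) = 0 :=
        cast_choose_pow_eq_zero hp (by omega) (by omega)
      have := congrArg (Nat.cast : ℕ → K) hpas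
      push_cast at this
      rw [h0] at this
      rw [ih (by omega)] at this
      have h2 : (((p ^ M - 1).choose (j+1) : K)) = -((-1:K)^j) := by linear_combination this
      rw [h2]
      ring

lemma key_binom (hp : p.Prime) {M a s : ℕ} (h : a + s ≤ p ^ M - 1) :
    (((p ^ M - 1 - a).choose s : K)) = (-1 : K) ^ s * (((a+s).choose s : K)) := by
  have e := Nat.choose_mul (n := p ^ M - 1) (k := a + s) (s := a) (Nat.le_add_right a s)
  rw [show a + s - a = s by omega] at e
  have ec := congrArg (Nat.cast : ℕ → K) e
  push_cast at ec
  rw [cast_choose_pred_pow hp h, cast_choose_pred_pow hp (by omega)] at ec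
  have sq : (-1:K)^a * (-1:K)^a = 1 := by
    rw [← mul_pow]; norm_num
  have csym : (a+s).choose a = (a+s).choose s := by
    rw [← Nat.choose_symm (Nat.le_add_right a s), show a + s - a = s by omega]
  rw [csym, pow_add] at ec
  -- ec : (-1)^a * (-1)^s * C = (-1)^a * C'
  -- goal : C' = (-1)^s * C
  have := congrArg (fun x => (-1:K)^a * x) ec
  calc (((p ^ M - 1 - a).choose s : K))
      = ((-1:K)^a * (-1:K)^a) * (((p ^ M - 1 - a).choose s : K)) := by rw [sq, one_mul]
    _ = (-1:K)^a * ((-1:K)^a * (((p ^ M - 1 - a).choose s : K))) := by ring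
    _ = (-1:K)^a * ((-1:K)^a * (-1:K)^s * (((a+s).choose s : K))) := by rw [ec]
    _ = (-1 : K) ^ s * (((a+s).choose s : K)) := by
        linear_combination ((-1:K)^s * (((a+s).choose s : K))) * sq

end CharP

lemma GzOdd_eq_fullsum (n k : ℕ) (hk : k % 2 = 1) (f g : ℕ → K) :
    GzOdd n k f g = ∑ i ∈ Finset.range (k+1),
      ((-1:K)^i) • dpMul n ((dpDer n)^[i] f) ((dpDer n)^[k-i] g) := by
  set I := (k-1)/2 + 1 with hI
  have h2I : k + 1 = 2 * I := by omega
  have hsplit : ∑ i ∈ Finset.range (k+1),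
      ((-1:K)^i) • dpMul n ((dpDer n)^[i] f) ((dpDer n)^[k-i] g)
    = (∑ i ∈ Finset.range I, ((-1:K)^i) • dpMul n ((dpDer n)^[i] f) ((dpDer n)^[k-i] g))
      + ∑ i ∈ Finset.Ico I (k+1), ((-1:K)^i) • dpMul n ((dpDer n)^[i] f) ((dpDer n)^[k-i] g) := by
    rw [Finset.range_eq_Ico, ← Finset.sum_Ico_consecutive _ (Nat.zero_le I) (by omega), ← Finset.range_eq_Ico]
  have hrefl : ∑ i ∈ Finset.Ico I (k+1), ((-1:K)^i) • dpMul n ((dpDer n)^[i] f) ((dpDer n)^[k-i] g)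
      = ∑ j ∈ Finset.range I, -(((-1:K)^j) • dpMul n ((dpDer n)^[k-j] f) ((dpDer n)^[j] g)) := by
    refine Finset.sum_bij' (fun i _ => k - i) (fun j _ => k - j) ?_ ?_ ?_ ?_ ?_
    · intro a ha; simp only [Finset.mem_Ico] at ha; simp only [Finset.mem_range]; omega
    · intro a ha; simp only [Finset.mem_range] at ha; simp only [Finset.mem_Ico]; omega
    · intro a ha; simp only [Finset.mem_Ico] at ha; show k - (k - a) = a; omega
    · intro a ha; simp only [Finset.mem_range] at ha; show k - (k - a) = a; omega
    · intro i hi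
      simp only [Finset.mem_Ico] at hi
      have hik : i ≤ k := by omega
      have h1 : k - (k - i) = i := by omega
      have hsgn : ((-1:K)^i) = -((-1:K)^(k - i)) := by
        have e1 : (-1:K)^(k-i) * (-1:K)^i = (-1:K)^k := by
          rw [← pow_add]; congr 1; omega
        have e2 : (-1:K)^k = -1 := Odd.neg_one_pow (Nat.odd_iff.2 hk)
        have sq : (-1:K)^(k-i) * (-1:K)^(k-i) = 1 := by rw [← mul_pow]; norm_num
        calc (-1:K)^i = ((-1:K)^(k-i) * (-1:K)^(k-i)) * (-1:K)^i := by rw [sq, one_mul]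
          _ = (-1:K)^(k-i) * ((-1:K)^(k-i) * (-1:K)^i) := by ring
          _ = (-1:K)^(k-i) * (-1) := by rw [e1, e2]
          _ = -((-1:K)^(k-i)) := by ring
      rw [hsgn, h1, neg_smul]
  rw [hsplit, hrefl, GzOdd]
  rw [← Finset.sum_add_distrib]
  refine Finset.sum_congr rfl fun i hi => ?_
  rw [smul_sub]
  abel

end Lemmas

/-- Gz : F_1 ⊗ F_1 → F_{k+2} is vect(1;N)-invariant, k = p^m - 2, p odd. -/
theorem GzOdd_invariant {K : Type*} [Field K] (p m N : ℕ) (hp : p.Prime)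
    (hodd : p ≠ 2) (hm : 1 ≤ m) [CharP K p] (k : ℕ) (hk : k = p ^ m - 2)
    (hkN : k < p ^ N) (h f g : ℕ → K)
    (hh : dpSupp (p ^ N) h) (hf : dpSupp (p ^ N) f) (hg : dpSupp (p ^ N) g) :
    dpLie (p ^ N) ((k : K) + 2) h (GzOdd (p ^ N) k f g)
      = GzOdd (p ^ N) k (dpLie (p ^ N) 1 h f) g
        + GzOdd (p ^ N) k f (dpLie (p ^ N) 1 h g) := by
  have hp3 : 3 ≤ p := by
    have := hp.two_le
    omega
  have hpm : 3 ≤ p ^ m := le_trans hp3 (Nat.le_self_pow (by omega) p)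
  have hk2 : k + 2 = p ^ m := by omega
  have hoddpm : p ^ m % 2 = 1 := Nat.odd_iff.1 ((hp.odd_of_ne_two hodd).pow)
  have hkodd : k % 2 = 1 := by omega
  have hcast : (k : K) + 2 = 0 := by
    have e1 : ((k : K)) + 2 = ((k + 2 : ℕ) : K) := by push_cast; ring
    rw [e1, hk2, Nat.cast_pow, CharP.cast_eq_zero K p, zero_pow (by omega : m ≠ 0)]
  -- reduce the left-hand side
  have LHSred : dpLie (p ^ N) ((k : K) + 2) h (GzOdd (p ^ N) k f g)
      = dpMul (p ^ N) h (dpDer (p ^ N) (GzOdd (p ^ N) k f g)) := by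
    rw [dpLie, hcast, zero_smul, add_zero]
  -- weight-one Lie derivatives are total derivatives
  have hLf : dpLie (p ^ N) 1 h f = dpDer (p ^ N) (dpMul (p ^ N) h f) := by
    rw [dpDer_dpMul hp hh hf, dpLie, one_smul, dpMul_comm f (dpDer (p ^ N) h)]
    abel
  have hLg : dpLie (p ^ N) 1 h g = dpDer (p ^ N) (dpMul (p ^ N) h g) := by
    rw [dpDer_dpMul hp hh hg, dpLie, one_smul, dpMul_comm g (dpDer (p ^ N) h)]
    abel
  -- expansion of the left-hand side
  have hLHS : dpMul (p ^ N) h (dpDer (p ^ N) (GzOdd (p ^ N) k f g))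
      = ∑ i ∈ Finset.range (k+1),
          (((-1:K)^i) • dpMul (p ^ N) h
              (dpMul (p ^ N) ((dpDer (p ^ N))^[i+1] f) ((dpDer (p ^ N))^[k-i] g))
           + ((-1:K)^i) • dpMul (p ^ N) h
              (dpMul (p ^ N) ((dpDer (p ^ N))^[i] f) ((dpDer (p ^ N))^[(k-i)+1] g))) := by
    rw [GzOdd_eq_fullsum _ _ hkodd, dpDer_sum, dpMul_sum_right]
    refine Finset.sum_congr rfl fun i _ => ?_
    rw [dpDer_smul, dpDer_dpMul hp (iterDer_supp hf i) (iterDer_supp hg (k-i)),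
      ← Function.iterate_succ_apply' (dpDer (p ^ N)) i f,
      ← Function.iterate_succ_apply' (dpDer (p ^ N)) (k-i) g,
      dpMul_smul_right, dpMul_add_right, smul_add]
  -- expansion of the first right-hand term
  have hGzf : GzOdd (p ^ N) k (dpLie (p ^ N) 1 h f) g
      = ∑ i ∈ Finset.range (k+1), ∑ s ∈ Finset.range (i+2),
          (((-1:K)^i) * (((i+1).choose s : K))) •
            dpMul (p ^ N) ((dpDer (p ^ N))^[s] h)
              (dpMul (p ^ N) ((dpDer (p ^ N))^[i+1-s] f) ((dpDer (p ^ N))^[k-i] g)) := by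
    rw [hLf, GzOdd_eq_fullsum _ _ hkodd]
    refine Finset.sum_congr rfl fun i _ => ?_
    rw [← Function.iterate_succ_apply (dpDer (p ^ N)) i (dpMul (p ^ N) h f),
      iter_leibniz hp hh hf (i+1), dpMul_sum_left, Finset.smul_sum]
    refine Finset.sum_congr rfl fun s _ => ?_
    rw [dpMul_smul_left, dpMul_assoc, smul_smul]
  -- expansion of the second right-hand term
  have hGzg : GzOdd (p ^ N) k f (dpLie (p ^ N) 1 h g)
      = ∑ i ∈ Finset.range (k+1), ∑ s ∈ Finset.range ((k-i)+2),
          (((-1:K)^i) * ((((k-i)+1).choose s : K))) •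
            dpMul (p ^ N) ((dpDer (p ^ N))^[s] h)
              (dpMul (p ^ N) ((dpDer (p ^ N))^[i] f) ((dpDer (p ^ N))^[(k-i)+1-s] g)) := by
    rw [hLg, GzOdd_eq_fullsum _ _ hkodd]
    refine Finset.sum_congr rfl fun i _ => ?_
    rw [← Function.iterate_succ_apply (dpDer (p ^ N)) (k-i) (dpMul (p ^ N) h g),
      iter_leibniz hp hh hg ((k-i)+1), dpMul_sum_right, Finset.smul_sum]
    refine Finset.sum_congr rfl fun s _ => ?_
    rw [dpMul_smul_right, dpMul_left_comm, smul_smul]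
  rw [LHSred, hLHS, hGzf, hGzg]
  -- split off the s = 0 terms in both double sums
  have split1 : ∀ i ∈ Finset.range (k+1),
      ∑ s ∈ Finset.range (i+2),
          (((-1:K)^i) * (((i+1).choose s : K))) •
            dpMul (p ^ N) ((dpDer (p ^ N))^[s] h)
              (dpMul (p ^ N) ((dpDer (p ^ N))^[i+1-s] f) ((dpDer (p ^ N))^[k-i] g))
      = (∑ t ∈ Finset.range (i+1),
          (((-1:K)^i) * (((i+1).choose (t+1) : K))) •
            dpMul (p ^ N) ((dpDer (p ^ N))^[t+1] h)
              (dpMul (p ^ N) ((dpDer (p ^ N))^[i-t] f) ((dpDer (p ^ N))^[k-i] g)))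
        + ((-1:K)^i) • dpMul (p ^ N) h
            (dpMul (p ^ N) ((dpDer (p ^ N))^[i+1] f) ((dpDer (p ^ N))^[k-i] g)) := by
    intro i _
    rw [Finset.sum_range_succ' _ (i+1)]
    congr 1
    · refine Finset.sum_congr rfl fun t _ => ?_
      rw [show i + 1 - (t + 1) = i - t by omega]
    · simp [Function.iterate_zero_apply]
  have split2 : ∀ i ∈ Finset.range (k+1),
      ∑ s ∈ Finset.range ((k-i)+2),
          (((-1:K)^i) * ((((k-i)+1).choose s : K))) •
            dpMul (p ^ N) ((dpDer (p ^ N))^[s] h)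
              (dpMul (p ^ N) ((dpDer (p ^ N))^[i] f) ((dpDer (p ^ N))^[(k-i)+1-s] g))
      = (∑ t ∈ Finset.range ((k-i)+1),
          (((-1:K)^i) * ((((k-i)+1).choose (t+1) : K))) •
            dpMul (p ^ N) ((dpDer (p ^ N))^[t+1] h)
              (dpMul (p ^ N) ((dpDer (p ^ N))^[i] f) ((dpDer (p ^ N))^[(k-i)-t] g)))
        + ((-1:K)^i) • dpMul (p ^ N) h
            (dpMul (p ^ N) ((dpDer (p ^ N))^[i] f) ((dpDer (p ^ N))^[(k-i)+1] g)) := by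
    intro i _
    rw [Finset.sum_range_succ' _ ((k-i)+1)]
    congr 1
    · refine Finset.sum_congr rfl fun t _ => ?_
      rw [show (k-i) + 1 - (t + 1) = (k-i) - t by omega]
    · simp [Function.iterate_zero_apply]
  rw [Finset.sum_congr rfl split1, Finset.sum_congr rfl split2,
    Finset.sum_add_distrib, Finset.sum_add_distrib, Finset.sum_add_distrib]
  -- the s = 0 parts reproduce the left-hand side; the rest cancels
  have hzero :
      (∑ i ∈ Finset.range (k+1), ∑ t ∈ Finset.range (i+1),
          (((-1:K)^i) * (((i+1).choose (t+1) : K))) •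
            dpMul (p ^ N) ((dpDer (p ^ N))^[t+1] h)
              (dpMul (p ^ N) ((dpDer (p ^ N))^[i-t] f) ((dpDer (p ^ N))^[k-i] g)))
      + (∑ i ∈ Finset.range (k+1), ∑ t ∈ Finset.range ((k-i)+1),
          (((-1:K)^i) * ((((k-i)+1).choose (t+1) : K))) •
            dpMul (p ^ N) ((dpDer (p ^ N))^[t+1] h)
              (dpMul (p ^ N) ((dpDer (p ^ N))^[i] f) ((dpDer (p ^ N))^[(k-i)-t] g)))
      = 0 := by
    have ext1 : ∀ i ∈ Finset.range (k+1),
        ∑ t ∈ Finset.range (i+1),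
            (((-1:K)^i) * (((i+1).choose (t+1) : K))) •
              dpMul (p ^ N) ((dpDer (p ^ N))^[t+1] h)
                (dpMul (p ^ N) ((dpDer (p ^ N))^[i-t] f) ((dpDer (p ^ N))^[k-i] g))
        = ∑ t ∈ Finset.range (k+1),
            (((-1:K)^i) * (((i+1).choose (t+1) : K))) •
              dpMul (p ^ N) ((dpDer (p ^ N))^[t+1] h)
                (dpMul (p ^ N) ((dpDer (p ^ N))^[i-t] f) ((dpDer (p ^ N))^[k-i] g)) := by
      intro i hi
      simp only [Finset.mem_range] at hi
      refine sum_range_extend (show i + 1 ≤ k + 1 by omega)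
        (fun t => (((-1:K)^i) * (((i+1).choose (t+1) : K))) •
              dpMul (p ^ N) ((dpDer (p ^ N))^[t+1] h)
                (dpMul (p ^ N) ((dpDer (p ^ N))^[i-t] f) ((dpDer (p ^ N))^[k-i] g)))
        (fun t ht ht' => ?_)
      have : (i+1).choose (t+1) = 0 := Nat.choose_eq_zero_of_lt (by omega)
      simp [this]
    have ext2 : ∀ i ∈ Finset.range (k+1),
        ∑ t ∈ Finset.range ((k-i)+1),
            (((-1:K)^i) * ((((k-i)+1).choose (t+1) : K))) •
              dpMul (p ^ N) ((dpDer (p ^ N))^[t+1] h)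
                (dpMul (p ^ N) ((dpDer (p ^ N))^[i] f) ((dpDer (p ^ N))^[(k-i)-t] g))
        = ∑ t ∈ Finset.range (k+1),
            (((-1:K)^i) * ((((k-i)+1).choose (t+1) : K))) •
              dpMul (p ^ N) ((dpDer (p ^ N))^[t+1] h)
                (dpMul (p ^ N) ((dpDer (p ^ N))^[i] f) ((dpDer (p ^ N))^[(k-i)-t] g)) := by
      intro i hi
      simp only [Finset.mem_range] at hi
      refine sum_range_extend (show (k-i) + 1 ≤ k + 1 by omega)
        (fun t => (((-1:K)^i) * ((((k-i)+1).choose (t+1) : K))) •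
              dpMul (p ^ N) ((dpDer (p ^ N))^[t+1] h)
                (dpMul (p ^ N) ((dpDer (p ^ N))^[i] f) ((dpDer (p ^ N))^[(k-i)-t] g)))
        (fun t ht ht' => ?_)
      have : ((k-i)+1).choose (t+1) = 0 := Nat.choose_eq_zero_of_lt (by omega)
      simp [this]
    have comm1 : (∑ i ∈ Finset.range (k+1), ∑ t ∈ Finset.range (k+1),
            (((-1:K)^i) * (((i+1).choose (t+1) : K))) •
              dpMul (p ^ N) ((dpDer (p ^ N))^[t+1] h)
                (dpMul (p ^ N) ((dpDer (p ^ N))^[i-t] f) ((dpDer (p ^ N))^[k-i] g)))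
        = ∑ t ∈ Finset.range (k+1), ∑ i ∈ Finset.range (k+1),
            (((-1:K)^i) * (((i+1).choose (t+1) : K))) •
              dpMul (p ^ N) ((dpDer (p ^ N))^[t+1] h)
                (dpMul (p ^ N) ((dpDer (p ^ N))^[i-t] f) ((dpDer (p ^ N))^[k-i] g)) :=
      Finset.sum_comm
    have comm2 : (∑ i ∈ Finset.range (k+1), ∑ t ∈ Finset.range (k+1),
            (((-1:K)^i) * ((((k-i)+1).choose (t+1) : K))) •
              dpMul (p ^ N) ((dpDer (p ^ N))^[t+1] h)
                (dpMul (p ^ N) ((dpDer (p ^ N))^[i] f) ((dpDer (p ^ N))^[(k-i)-t] g)))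
        = ∑ t ∈ Finset.range (k+1), ∑ i ∈ Finset.range (k+1),
            (((-1:K)^i) * ((((k-i)+1).choose (t+1) : K))) •
              dpMul (p ^ N) ((dpDer (p ^ N))^[t+1] h)
                (dpMul (p ^ N) ((dpDer (p ^ N))^[i] f) ((dpDer (p ^ N))^[(k-i)-t] g)) :=
      Finset.sum_comm
    rw [Finset.sum_congr rfl ext1, Finset.sum_congr rfl ext2, comm1, comm2,
      ← Finset.sum_add_distrib]
    refine Finset.sum_eq_zero fun t ht => ?_
    simp only [Finset.mem_range] at ht
    -- fixed t: the two i-sums cancel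
    have drop1 : ∑ i ∈ Finset.range (k+1),
        (((-1:K)^i) * (((i+1).choose (t+1) : K))) •
          dpMul (p ^ N) ((dpDer (p ^ N))^[t+1] h)
            (dpMul (p ^ N) ((dpDer (p ^ N))^[i-t] f) ((dpDer (p ^ N))^[k-i] g))
        = ∑ l ∈ Finset.range (k+1-t),
            (((-1:K)^(t+l)) * (((t+l+1).choose (t+1) : K))) •
              dpMul (p ^ N) ((dpDer (p ^ N))^[t+1] h)
                (dpMul (p ^ N) ((dpDer (p ^ N))^[t+l-t] f) ((dpDer (p ^ N))^[k-(t+l)] g)) := by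
      refine sum_range_drop (show t ≤ k + 1 by omega)
        (fun i => (((-1:K)^i) * (((i+1).choose (t+1) : K))) •
          dpMul (p ^ N) ((dpDer (p ^ N))^[t+1] h)
            (dpMul (p ^ N) ((dpDer (p ^ N))^[i-t] f) ((dpDer (p ^ N))^[k-i] g)))
        (fun i hit => ?_)
      have : (i+1).choose (t+1) = 0 := Nat.choose_eq_zero_of_lt (by omega)
      simp [this]
    have drop2 : ∑ i ∈ Finset.range (k+1),
        (((-1:K)^i) * ((((k-i)+1).choose (t+1) : K))) •
          dpMul (p ^ N) ((dpDer (p ^ N))^[t+1] h)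
            (dpMul (p ^ N) ((dpDer (p ^ N))^[i] f) ((dpDer (p ^ N))^[(k-i)-t] g))
        = ∑ l ∈ Finset.range (k+1-t),
            (((-1:K)^l) * ((((k-l)+1).choose (t+1) : K))) •
              dpMul (p ^ N) ((dpDer (p ^ N))^[t+1] h)
                (dpMul (p ^ N) ((dpDer (p ^ N))^[l] f) ((dpDer (p ^ N))^[(k-l)-t] g)) := by
      refine (sum_range_extend (show k + 1 - t ≤ k + 1 by omega)
        (fun i => (((-1:K)^i) * ((((k-i)+1).choose (t+1) : K))) •
          dpMul (p ^ N) ((dpDer (p ^ N))^[t+1] h)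
            (dpMul (p ^ N) ((dpDer (p ^ N))^[i] f) ((dpDer (p ^ N))^[(k-i)-t] g)))
        (fun i hit hit' => ?_)).symm
      have : ((k-i)+1).choose (t+1) = 0 := Nat.choose_eq_zero_of_lt (by omega)
      simp [this]
    rw [drop1, drop2, ← Finset.sum_add_distrib]
    refine Finset.sum_eq_zero fun l hl => ?_
    simp only [Finset.mem_range] at hl
    have hidx1 : t + l - t = l := by omega
    have hidx2 : k - (t + l) = (k - l) - t := by omega
    rw [hidx1, hidx2, ← add_smul]
    have hkb : (((k-l)+1).choose (t+1) : K) = (-1:K)^(t+1) * (((l+t+1).choose (t+1) : K)) := by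
      have hb := key_binom (K := K) hp (M := m) (a := l) (s := t+1) (by omega)
      rw [show p ^ m - 1 - l = (k-l)+1 by omega, show l + (t+1) = l+t+1 by omega] at hb
      exact hb
    have hco : ((-1:K)^(t+l)) * (((t+l+1).choose (t+1) : K))
        + ((-1:K)^l) * ((((k-l)+1).choose (t+1) : K)) = 0 := by
      rw [hkb, show t+l+1 = l+t+1 by omega, pow_add ((-1:K)) t l, pow_add ((-1:K)) t 1]
      ring
    rw [hco, zero_smul]
  rw [add_add_add_comm, hzero, zero_add]
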